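/- Let w_ℓ, w_u be real constants with −π² < w_ℓ ≤ w_u, set c₁ = 1 + w_ℓ/π² and M = max(|w_ℓ|, |w_u|). Let w, g : [0,1] → ℝ be continuous with w_ℓ ≤ w(x) ≤ w_u for all x, and let p : ℝ → ℝ be twice continuously differentiable on [0,1] with p(0) = p(1) = 0 and −p″(x) + w(x) p(x) = g(x) for all x ∈ [0,1]. Then sup_{x ∈ [0,1]} |p′(x)| ≤ (1 + M/(π c₁)) · (∫_0^1 g(x)² dx)^{1/2}. -/

import Mathlib

open MeasureTheory Real intervalIntegral

lemma contint {f : ℝ → ℝ} (hf : ContinuousOn f (Set.Icc 0 1)) :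
    IntervalIntegrable f volume 0 1 := by
  apply ContinuousOn.intervalIntegrable
  rwa [Set.uIcc_of_le (by norm_num : (0:ℝ) ≤ 1)]

lemma cs_int (f g : ℝ → ℝ) (hf : ContinuousOn f (Set.Icc 0 1))
    (hg : ContinuousOn g (Set.Icc 0 1)) :
    (∫ x in (0:ℝ)..1, f x * g x) ≤
      Real.sqrt (∫ x in (0:ℝ)..1, f x ^ 2) * Real.sqrt (∫ x in (0:ℝ)..1, g x ^ 2) := by
  set A := ∫ x in (0:ℝ)..1, f x ^ 2 with hA
  set B := ∫ x in (0:ℝ)..1, f x * g x with hB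
  set C := ∫ x in (0:ℝ)..1, g x ^ 2 with hC
  have hfi := contint hf
  have hgi := contint hg
  have hf2 : IntervalIntegrable (fun x => f x ^ 2) volume 0 1 := contint (hf.pow 2)
  have hg2 : IntervalIntegrable (fun x => g x ^ 2) volume 0 1 := contint (hg.pow 2)
  have hfg : IntervalIntegrable (fun x => f x * g x) volume 0 1 := contint (hf.mul hg)
  have hAnn : 0 ≤ A := intervalIntegral.integral_nonneg (by norm_num)
    (fun x _ => sq_nonneg _)
  have hCnn : 0 ≤ C := intervalIntegral.integral_nonneg (by norm_num)
    (fun x _ => sq_nonneg _)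
  have key : B ^ 2 ≤ A * C := by
    have hq : ∀ t : ℝ, 0 ≤ C * (t * t) + (2 * B) * t + A := by
      intro t
      have h1 : (∫ x in (0:ℝ)..1, (t * g x + f x) ^ 2) =
          C * (t * t) + (2 * B) * t + A := by
        have : ∀ x, (t * g x + f x) ^ 2 =
            (t * t) * g x ^ 2 + (2 * t) * (f x * g x) + f x ^ 2 := by intro x; ring
        simp_rw [this]
        rw [intervalIntegral.integral_add (((hg2.const_mul _)).add (hfg.const_mul _)) hf2,
          intervalIntegral.integral_add (hg2.const_mul _) (hfg.const_mul _),
          intervalIntegral.integral_const_mul, intervalIntegral.integral_const_mul]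
        ring
      rw [← h1]
      exact intervalIntegral.integral_nonneg (by norm_num) (fun x _ => sq_nonneg _)
    have := discrim_le_zero hq
    rw [discrim] at this
    nlinarith
  calc B ≤ |B| := le_abs_self _
    _ = Real.sqrt (B ^ 2) := (Real.sqrt_sq_eq_abs B).symm
    _ ≤ Real.sqrt (A * C) := Real.sqrt_le_sqrt key
    _ = Real.sqrt A * Real.sqrt C := Real.sqrt_mul hAnn _

open Set Filter Topology intervalIntegral in
lemma wirtinger (p p' : ℝ → ℝ)
    (hp : ∀ x ∈ Set.Icc (0:ℝ) 1, HasDerivAt p (p' x) x)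
    (hp'c : ContinuousOn p' (Set.Icc 0 1))
    (hp0 : p 0 = 0) (hp1 : p 1 = 0) :
    π ^ 2 * ∫ x in (0:ℝ)..1, p x ^ 2 ≤ ∫ x in (0:ℝ)..1, p' x ^ 2 := by
  have hpc : ContinuousOn p (Set.Icc 0 1) :=
    fun x hx => (hp x hx).continuousAt.continuousWithinAt
  have hπ : (0:ℝ) < π := Real.pi_pos
  have hsinpos : ∀ x ∈ Set.Ioo (0:ℝ) 1, 0 < Real.sin (π * x) := by
    intro x hx
    exact Real.sin_pos_of_pos_of_lt_pi (by nlinarith [hx.1, Real.pi_pos])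
      (by nlinarith [hx.2, Real.pi_pos])
  -- the extension of p x / sin (π x)
  set r : ℝ → ℝ := fun x =>
    if x = 0 then p' 0 / π else if x = 1 then -(p' 1) / π else p x / Real.sin (π * x)
    with hr_def
  have hr_eq : ∀ x ∈ Set.Ioo (0:ℝ) 1, r x = p x / Real.sin (π * x) := by
    intro x hx
    simp only [hr_def, if_neg hx.1.ne', if_neg hx.2.ne]
  -- derivative of sin (π y)
  have hsin : ∀ x : ℝ, HasDerivAt (fun y => Real.sin (π * y)) (π * Real.cos (π * x)) x := by
    intro x
    have := (Real.hasDerivAt_sin (π * x)).comp x ((hasDerivAt_id x).const_mul π)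
    simpa [Function.comp_def, mul_comm] using this
  have hcos : ∀ x : ℝ, HasDerivAt (fun y => Real.cos (π * y)) (-(π * Real.sin (π * x))) x := by
    intro x
    have := (Real.hasDerivAt_cos (π * x)).comp x ((hasDerivAt_id x).const_mul π)
    simpa [Function.comp_def, mul_comm] using this
  -- continuity of r on [0,1]
  have hrc : ContinuousOn r (Set.Icc 0 1) := by
    intro x hx
    rcases eq_or_ne x 0 with rfl | hx0
    · -- at 0
      rw [← continuousWithinAt_diff_self]
      have hsub : Set.Icc (0:ℝ) 1 \ {0} ⊆ Set.Ioc 0 1 := by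
        intro y hy
        exact ⟨lt_of_le_of_ne hy.1.1 (Ne.symm (by simpa using hy.2)), hy.1.2⟩
      have hev : ∀ᶠ y in 𝓝[Set.Icc (0:ℝ) 1 \ {0}] 0, y ∈ Set.Ioo (0:ℝ) 1 ∨ y = 1 := by
        filter_upwards [self_mem_nhdsWithin] with y hy
        rcases eq_or_ne y 1 with rfl | h1
        · exact Or.inr rfl
        · exact Or.inl ⟨(hsub hy).1, lt_of_le_of_ne (hsub hy).2 h1⟩
      have hev2 : ∀ᶠ y in 𝓝[Set.Icc (0:ℝ) 1 \ {0}] 0, y ∈ Set.Ioo (0:ℝ) 1 := by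
        have hlt : ∀ᶠ y in 𝓝[Set.Icc (0:ℝ) 1 \ {0}] 0, y < 1 :=
          eventually_nhdsWithin_of_eventually_nhds (Filter.Tendsto.eventually_lt_const
            (by norm_num) tendsto_id)
        filter_upwards [self_mem_nhdsWithin, hlt] with y hy hlt1
        exact ⟨(hsub hy).1, hlt1⟩
      have hne : 𝓝[Set.Icc (0:ℝ) 1 \ {0}] (0:ℝ) ≤ 𝓝[≠] 0 :=
        nhdsWithin_mono _ (by intro y hy; simpa using hy.2)
      have h1 : Tendsto (fun y => p y / y) (𝓝[Set.Icc (0:ℝ) 1 \ {0}] 0) (𝓝 (p' 0)) := by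
        have := (hasDerivAt_iff_tendsto_slope.mp (hp 0 ⟨le_refl 0, zero_le_one⟩)).mono_left hne
        refine this.congr ?_
        intro y; simp [slope, hp0, div_eq_inv_mul]
      have h2 : Tendsto (fun y => y / Real.sin (π * y)) (𝓝[Set.Icc (0:ℝ) 1 \ {0}] 0)
          (𝓝 π⁻¹) := by
        have hs0 : Real.sin (π * 0) = 0 := by simp
        have := (hasDerivAt_iff_tendsto_slope.mp (hsin 0)).mono_left hne
        have h3 : Tendsto (fun y => Real.sin (π * y) / y) (𝓝[Set.Icc (0:ℝ) 1 \ {0}] 0)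
            (𝓝 (π * Real.cos (π * 0))) := by
          refine this.congr ?_
          intro y; simp [slope, hs0, div_eq_inv_mul]
        have h4 := h3.inv₀ (by simp [hπ.ne'])
        simpa using h4.congr (by intro y; rw [inv_div])
      have h5 : Tendsto (fun y => (p y / y) * (y / Real.sin (π * y)))
          (𝓝[Set.Icc (0:ℝ) 1 \ {0}] 0) (𝓝 (p' 0 * π⁻¹)) := h1.mul h2
      have : Tendsto r (𝓝[Set.Icc (0:ℝ) 1 \ {0}] 0) (𝓝 (p' 0 * π⁻¹)) := by
        refine h5.congr' ?_
        filter_upwards [hev2, self_mem_nhdsWithin] with y hy hy'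
        have hyne : y ≠ 0 := hy.1.ne'
        rw [hr_eq y hy, div_mul_div_comm, mul_comm y _, mul_div_mul_right _ _ hyne]
      have hval : r 0 = p' 0 * π⁻¹ := by simp [hr_def, div_eq_mul_inv]
      rw [ContinuousWithinAt, hval]
      exact this
    · rcases eq_or_ne x 1 with rfl | hx1
      · -- at 1
        rw [← continuousWithinAt_diff_self]
        have hsub : Set.Icc (0:ℝ) 1 \ {1} ⊆ Set.Ico 0 1 := by
          intro y hy
          exact ⟨hy.1.1, lt_of_le_of_ne hy.1.2 (by simpa using hy.2)⟩
        have hne : 𝓝[Set.Icc (0:ℝ) 1 \ {1}] (1:ℝ) ≤ 𝓝[≠] 1 :=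
          nhdsWithin_mono _ (by intro y hy; simpa using hy.2)
        have hev2 : ∀ᶠ y in 𝓝[Set.Icc (0:ℝ) 1 \ {1}] 1, y ∈ Set.Ioo (0:ℝ) 1 := by
          have hlt : ∀ᶠ y in 𝓝[Set.Icc (0:ℝ) 1 \ {1}] 1, (0:ℝ) < y :=
            eventually_nhdsWithin_of_eventually_nhds (Filter.Tendsto.eventually_const_lt
              (by norm_num) tendsto_id)
          filter_upwards [self_mem_nhdsWithin, hlt] with y hy h0
          exact ⟨h0, (hsub hy).2⟩
        have h1 : Tendsto (fun y => p y / (y - 1)) (𝓝[Set.Icc (0:ℝ) 1 \ {1}] 1) (𝓝 (p' 1)) := by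
          have := (hasDerivAt_iff_tendsto_slope.mp (hp 1 ⟨zero_le_one, le_refl 1⟩)).mono_left hne
          refine this.congr ?_
          intro y; simp [slope, hp1, div_eq_inv_mul]
        have h2 : Tendsto (fun y => (y - 1) / Real.sin (π * y)) (𝓝[Set.Icc (0:ℝ) 1 \ {1}] 1)
            (𝓝 (π * Real.cos (π * 1))⁻¹) := by
          have hs1 : Real.sin (π * 1) = 0 := by simp
          have := (hasDerivAt_iff_tendsto_slope.mp (hsin 1)).mono_left hne
          have h3 : Tendsto (fun y => Real.sin (π * y) / (y - 1)) (𝓝[Set.Icc (0:ℝ) 1 \ {1}] 1)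
              (𝓝 (π * Real.cos (π * 1))) := by
            refine this.congr ?_
            intro y; simp [slope, hs1, div_eq_inv_mul]
          have h4 := h3.inv₀ (by simp [hπ.ne'])
          exact h4.congr (by intro y; rw [inv_div])
        have h5 := h1.mul h2
        have : Tendsto r (𝓝[Set.Icc (0:ℝ) 1 \ {1}] 1)
            (𝓝 (p' 1 * (π * Real.cos (π * 1))⁻¹)) := by
          refine h5.congr' ?_
          filter_upwards [hev2] with y hy
          have hyne : y - 1 ≠ 0 := sub_ne_zero.mpr hy.2.ne
          rw [hr_eq y hy, div_mul_div_comm, mul_comm (y-1) _, mul_div_mul_right _ _ hyne]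
        have hval : r 1 = p' 1 * (π * Real.cos (π * 1))⁻¹ := by
          simp only [hr_def, if_neg (one_ne_zero), if_true, mul_one, Real.cos_pi,
            mul_neg_one, inv_neg, mul_neg, neg_div]
          rw [neg_inj, div_eq_mul_inv]
        rw [ContinuousWithinAt, hval]
        exact this
      · -- interior
        have hxo : x ∈ Set.Ioo (0:ℝ) 1 :=
          ⟨lt_of_le_of_ne hx.1 (Ne.symm hx0), lt_of_le_of_ne hx.2 hx1⟩
        have hco : ContinuousAt (fun y => p y / Real.sin (π * y)) x := by
          exact ((hp x hx).continuousAt).div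
            (Real.continuous_sin.comp (continuous_const.mul continuous_id)).continuousAt
            (hsinpos x hxo).ne'
        have : ContinuousAt r x := by
          refine hco.congr ?_
          filter_upwards [Ioo_mem_nhds hxo.1 hxo.2] with y hy
          exact (hr_eq y hy).symm
        exact this.continuousWithinAt
  -- G and F
  set G : ℝ → ℝ := fun x => p' x - π * Real.cos (π * x) * r x with hG_def
  have hGc : ContinuousOn G (Set.Icc 0 1) := by
    apply hp'c.sub
    exact (continuous_const.mul (Real.continuous_cos.comp
      (continuous_const.mul continuous_id))).continuousOn.mul hrc
  set F : ℝ → ℝ := fun x => π * Real.cos (π * x) * p x * r x with hF_def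
  have hFc : ContinuousOn F (Set.Icc 0 1) := by
    exact (((continuous_const.mul (Real.continuous_cos.comp
      (continuous_const.mul continuous_id))).continuousOn.mul hpc)).mul hrc
  have hF0 : F 0 = 0 := by simp [hF_def, hp0]
  have hF1 : F 1 = 0 := by simp [hF_def, hp1]
  set F' : ℝ → ℝ := fun x => p' x ^ 2 - π ^ 2 * p x ^ 2 - G x ^ 2 with hF'_def
  have hF'c : ContinuousOn F' (Set.Icc 0 1) := by
    exact ((hp'c.pow 2).sub ((continuousOn_const).mul (hpc.pow 2))).sub (hGc.pow 2)
  have hFderiv : ∀ x ∈ Set.Ioo (0:ℝ) 1, HasDerivAt F (F' x) x := by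
    intro x hx
    have hsne : Real.sin (π * x) ≠ 0 := (hsinpos x hx).ne'
    have hpx := hp x (Set.mem_Icc_of_Ioo hx)
    -- numerator
    have hN : HasDerivAt (fun y => π * Real.cos (π * y) * p y * p y)
        ((π * -(π * Real.sin (π * x)) * p x + π * Real.cos (π * x) * p' x) * p x
          + π * Real.cos (π * x) * p x * p' x) x := by
      exact (((hcos x).const_mul π).mul hpx).mul hpx
    have hQ := hN.div (hsin x) hsne
    have hFeq : F =ᶠ[𝓝 x] (fun y => π * Real.cos (π * y) * p y * p y / Real.sin (π * y)) := by
      filter_upwards [Ioo_mem_nhds hx.1 hx.2] with y hy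
      rw [hF_def]
      simp only
      rw [hr_eq y hy]
      field_simp
    have hFd := hQ.congr_of_eventuallyEq hFeq
    refine hFd.congr_deriv ?_
    rw [hF'_def, hG_def]
    simp only
    rw [hr_eq x hx]
    field_simp
    ring
  have hFTC := intervalIntegral.integral_eq_sub_of_hasDerivAt_of_le (by norm_num : (0:ℝ) ≤ 1)
    hFc hFderiv (contint hF'c)
  rw [hF0, hF1, sub_zero] at hFTC
  -- split the integral
  have hi1 : IntervalIntegrable (fun x => p' x ^ 2) volume 0 1 := contint (hp'c.pow 2)
  have hi2 : IntervalIntegrable (fun x => π ^ 2 * p x ^ 2) volume 0 1 :=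
    contint (continuousOn_const.mul (hpc.pow 2))
  have hi3 : IntervalIntegrable (fun x => G x ^ 2) volume 0 1 := contint (hGc.pow 2)
  have hsplit : (∫ x in (0:ℝ)..1, F' x)
      = (∫ x in (0:ℝ)..1, p' x ^ 2) - π ^ 2 * (∫ x in (0:ℝ)..1, p x ^ 2)
        - ∫ x in (0:ℝ)..1, G x ^ 2 := by
    rw [hF'_def]
    rw [intervalIntegral.integral_sub (hi1.sub hi2) hi3, intervalIntegral.integral_sub hi1 hi2,
      intervalIntegral.integral_const_mul]
  rw [hFTC] at hsplit
  have hG2 : 0 ≤ ∫ x in (0:ℝ)..1, G x ^ 2 :=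
    intervalIntegral.integral_nonneg (by norm_num) (fun x _ => sq_nonneg _)
  linarith

theorem adjoint_deriv_uniform_bound
    (wl wu : ℝ) (hwl : -π ^ 2 < wl) (hwlu : wl ≤ wu)
    (w g : ℝ → ℝ)
    (hwc : ContinuousOn w (Set.Icc 0 1)) (hgc : ContinuousOn g (Set.Icc 0 1))
    (hwb : ∀ x ∈ Set.Icc (0:ℝ) 1, wl ≤ w x ∧ w x ≤ wu)
    (p p' p'' : ℝ → ℝ)
    (hp : ∀ x ∈ Set.Icc (0:ℝ) 1, HasDerivAt p (p' x) x)
    (hp' : ∀ x ∈ Set.Icc (0:ℝ) 1, HasDerivAt p' (p'' x) x)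
    (hp''c : ContinuousOn p'' (Set.Icc 0 1))
    (hp0 : p 0 = 0) (hp1 : p 1 = 0)
    (hpde : ∀ x ∈ Set.Icc (0:ℝ) 1, -p'' x + w x * p x = g x) :
    ∀ x ∈ Set.Icc (0:ℝ) 1,
      |p' x| ≤ (1 + max |wl| |wu| / (π * (1 + wl / π ^ 2))) *
        Real.sqrt (∫ x in (0:ℝ)..1, g x ^ 2) := by
  have hπ : (0:ℝ) < π := Real.pi_pos
  have hπ3 : (3:ℝ) < π := by
    have := Real.pi_gt_three; linarith
  have huIcc : Set.uIcc (0:ℝ) 1 = Set.Icc 0 1 := Set.uIcc_of_le (by norm_num)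
  have hpc : ContinuousOn p (Set.Icc 0 1) :=
    fun y hy => (hp y hy).continuousAt.continuousWithinAt
  have hp'c : ContinuousOn p' (Set.Icc 0 1) :=
    fun y hy => (hp' y hy).continuousAt.continuousWithinAt
  set M := max |wl| |wu| with hM_def
  have hMnn : 0 ≤ M := le_trans (abs_nonneg wl) (le_max_left _ _)
  have hwM : ∀ y ∈ Set.Icc (0:ℝ) 1, |w y| ≤ M := by
    intro y hy
    rw [abs_le]
    constructor
    · have := (hwb y hy).1
      have : -|wl| ≤ w y := le_trans (neg_abs_le wl) this
      exact le_trans (neg_le_neg (le_max_left |wl| |wu|)) this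
    · exact le_trans (hwb y hy).2 (le_trans (le_abs_self wu) (le_max_right _ _))
  set GN := Real.sqrt (∫ x in (0:ℝ)..1, g x ^ 2) with hGN_def
  set PN := Real.sqrt (∫ x in (0:ℝ)..1, p x ^ 2) with hPN_def
  have hGNnn : 0 ≤ GN := Real.sqrt_nonneg _
  have hPNnn : 0 ≤ PN := Real.sqrt_nonneg _
  have hp2nn : 0 ≤ ∫ x in (0:ℝ)..1, p x ^ 2 :=
    intervalIntegral.integral_nonneg (by norm_num) (fun y _ => sq_nonneg _)
  have hg2nn : 0 ≤ ∫ x in (0:ℝ)..1, g x ^ 2 :=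
    intervalIntegral.integral_nonneg (by norm_num) (fun y _ => sq_nonneg _)
  have hPN2 : PN ^ 2 = ∫ x in (0:ℝ)..1, p x ^ 2 := Real.sq_sqrt hp2nn
  -- energy identity
  have hpde' : ∀ y ∈ Set.Icc (0:ℝ) 1, p'' y = w y * p y - g y := by
    intro y hy
    have := hpde y hy
    linarith
  have hEderiv : ∀ y ∈ Set.uIcc (0:ℝ) 1,
      HasDerivAt (fun z => p z * p' z) (p' y * p' y + p y * p'' y) y := by
    intro y hy
    rw [huIcc] at hy
    exact (hp y hy).mul (hp' y hy)
  have hEint : IntervalIntegrable (fun y => p' y * p' y + p y * p'' y) volume 0 1 :=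
    contint ((hp'c.mul hp'c).add (hpc.mul hp''c))
  have hE := intervalIntegral.integral_eq_sub_of_hasDerivAt hEderiv hEint
  rw [hp0, hp1] at hE
  simp only [mul_zero, zero_mul, sub_zero] at hE
  have hii1 : IntervalIntegrable (fun y => p' y * p' y) volume 0 1 := contint (hp'c.mul hp'c)
  have hii2 : IntervalIntegrable (fun y => p y * p'' y) volume 0 1 := contint (hpc.mul hp''c)
  rw [intervalIntegral.integral_add hii1 hii2] at hE
  have hcongr : (∫ y in (0:ℝ)..1, p y * p'' y)
      = ∫ y in (0:ℝ)..1, (w y * p y ^ 2 - g y * p y) := by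
    apply intervalIntegral.integral_congr
    intro y hy
    rw [huIcc] at hy
    show p y * p'' y = _
    rw [hpde' y hy]
    ring
  rw [hcongr] at hE
  have hii3 : IntervalIntegrable (fun y => w y * p y ^ 2) volume 0 1 :=
    contint (hwc.mul (hpc.pow 2))
  have hii4 : IntervalIntegrable (fun y => g y * p y) volume 0 1 := contint (hgc.mul hpc)
  rw [intervalIntegral.integral_sub hii3 hii4] at hE
  have hEnergy : (∫ y in (0:ℝ)..1, p' y ^ 2) + (∫ y in (0:ℝ)..1, w y * p y ^ 2)
      = ∫ y in (0:ℝ)..1, g y * p y := by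
    have : (∫ y in (0:ℝ)..1, p' y * p' y) = ∫ y in (0:ℝ)..1, p' y ^ 2 := by
      apply intervalIntegral.integral_congr; intro y _; ring
    linarith [hE, this]
  -- Wirtinger
  have hW := wirtinger p p' hp hp'c hp0 hp1
  -- lower bound on potential term
  have hwlow : wl * (∫ y in (0:ℝ)..1, p y ^ 2) ≤ ∫ y in (0:ℝ)..1, w y * p y ^ 2 := by
    rw [← intervalIntegral.integral_const_mul]
    apply intervalIntegral.integral_mono_on (by norm_num)
      (contint (continuousOn_const.mul (hpc.pow 2))) hii3
    intro y hy
    exact mul_le_mul_of_nonneg_right (hwb y hy).1 (sq_nonneg _)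
  -- Cauchy-Schwarz on ∫ g p
  have hCS : (∫ y in (0:ℝ)..1, g y * p y) ≤ GN * PN := cs_int g p hgc hpc
  -- key bound
  have hA : (0:ℝ) < π ^ 2 + wl := by linarith
  have hkey : (π ^ 2 + wl) * PN ≤ GN := by
    have h1 : (π ^ 2 + wl) * PN ^ 2 ≤ GN * PN := by
      calc (π ^ 2 + wl) * PN ^ 2
          = π ^ 2 * (∫ y in (0:ℝ)..1, p y ^ 2) + wl * (∫ y in (0:ℝ)..1, p y ^ 2) := by
            rw [hPN2]; ring
        _ ≤ (∫ y in (0:ℝ)..1, p' y ^ 2) + (∫ y in (0:ℝ)..1, w y * p y ^ 2) := by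
            exact add_le_add hW hwlow
        _ = ∫ y in (0:ℝ)..1, g y * p y := hEnergy
        _ ≤ GN * PN := hCS
    rcases eq_or_lt_of_le hPNnn with h0 | hpos
    · rw [← h0]; simpa using hGNnn
    · have := mul_le_mul_of_nonneg_right (le_refl ((π ^ 2 + wl) * PN)) (le_of_lt hpos)
      nlinarith [h1, hpos]
  -- a zero of p'
  have hintp'0 : (∫ y in (0:ℝ)..1, p' y) = 0 := by
    have := intervalIntegral.integral_eq_sub_of_hasDerivAt
      (f := p) (f' := p') (fun y hy => hp y (huIcc ▸ hy)) (contint hp'c)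
    rw [this, hp0, hp1, sub_zero]
  obtain ⟨a, ha, hmin⟩ := isCompact_Icc.exists_isMinOn (Set.nonempty_Icc.mpr (by norm_num))
    hp'c
  obtain ⟨b, hb, hmax⟩ := isCompact_Icc.exists_isMaxOn (Set.nonempty_Icc.mpr (by norm_num))
    hp'c
  have hpa : p' a ≤ 0 := by
    have h1 : (∫ y in (0:ℝ)..1, p' a) ≤ ∫ y in (0:ℝ)..1, p' y := by
      apply intervalIntegral.integral_mono_on (by norm_num) intervalIntegrable_const
        (contint hp'c)
      intro y hy; exact hmin hy
    simp only [intervalIntegral.integral_const, smul_eq_mul, sub_zero, one_mul] at h1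
    linarith [hintp'0, h1]
  have hpb : 0 ≤ p' b := by
    have h1 : (∫ y in (0:ℝ)..1, p' y) ≤ ∫ y in (0:ℝ)..1, p' b := by
      apply intervalIntegral.integral_mono_on (by norm_num) (contint hp'c)
        intervalIntegrable_const
      intro y hy; exact hmax hy
    simp only [intervalIntegral.integral_const, smul_eq_mul, sub_zero, one_mul] at h1
    linarith [hintp'0, h1]
  have hsubuIcc : Set.uIcc a b ⊆ Set.Icc 0 1 := Set.uIcc_subset_Icc ha hb
  obtain ⟨ξ, hξmem, hξ0⟩ : ∃ ξ ∈ Set.uIcc a b, p' ξ = 0 := by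
    have h0mem : (0:ℝ) ∈ Set.uIcc (p' a) (p' b) := by
      rw [Set.mem_uIcc]; left; exact ⟨hpa, hpb⟩
    have := intermediate_value_uIcc (hp'c.mono hsubuIcc)
    obtain ⟨ξ, hξ, hξv⟩ := this h0mem
    exact ⟨ξ, hξ, hξv⟩
  have hξIcc : ξ ∈ Set.Icc (0:ℝ) 1 := hsubuIcc hξmem
  -- pointwise bound
  intro x hx
  have hFTCx : p' x - p' ξ = ∫ y in ξ..x, p'' y := by
    have hsub2 : Set.uIcc ξ x ⊆ Set.Icc 0 1 := Set.uIcc_subset_Icc hξIcc hx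
    rw [intervalIntegral.integral_eq_sub_of_hasDerivAt
      (fun y hy => hp' y (hsub2 hy))
      ((hp''c.mono hsub2).intervalIntegrable)]
  have habs : |p' x| ≤ ∫ y in (0:ℝ)..1, |p'' y| := by
    have h1 : |p' x| = |∫ y in ξ..x, p'' y| := by
      rw [← hFTCx, hξ0, sub_zero]
    rw [h1]
    have habs2 : ∀ (u v : ℝ), u ∈ Set.Icc (0:ℝ) 1 → v ∈ Set.Icc (0:ℝ) 1 → u ≤ v →
        |∫ y in u..v, p'' y| ≤ ∫ y in (0:ℝ)..1, |p'' y| := by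
      intro u v hu hv huv
      have hsub3 : Set.uIcc u v ⊆ Set.Icc 0 1 := Set.uIcc_subset_Icc hu hv
      calc |∫ y in u..v, p'' y| ≤ ∫ y in u..v, |p'' y| := by
            apply intervalIntegral.abs_integral_le_integral_abs huv
        _ ≤ ∫ y in (0:ℝ)..1, |p'' y| := by
            apply intervalIntegral.integral_mono_interval hu.1 huv hv.2
            · filter_upwards with y using abs_nonneg _
            · exact contint hp''c.abs
    rcases le_total ξ x with h | h
    · exact habs2 ξ x hξIcc hx h
    · rw [intervalIntegral.integral_symm, abs_neg]
      exact habs2 x ξ hx hξIcc h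
  -- bound |p''| pointwise
  have hptwise : ∀ y ∈ Set.Icc (0:ℝ) 1, |p'' y| ≤ |g y| + M * |p y| := by
    intro y hy
    rw [hpde' y hy]
    calc |w y * p y - g y| ≤ |w y * p y| + |g y| := abs_sub _ _
      _ = |w y| * |p y| + |g y| := by rw [abs_mul]
      _ ≤ M * |p y| + |g y| :=
          add_le_add_left (mul_le_mul_of_nonneg_right (hwM y hy) (abs_nonneg _)) _
      _ = |g y| + M * |p y| := by ring
  have hint1 : (∫ y in (0:ℝ)..1, |p'' y|) ≤ (∫ y in (0:ℝ)..1, |g y|)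
      + M * ∫ y in (0:ℝ)..1, |p y| := by
    have h1 : (∫ y in (0:ℝ)..1, |p'' y|) ≤ ∫ y in (0:ℝ)..1, (|g y| + M * |p y|) := by
      apply intervalIntegral.integral_mono_on (by norm_num) (contint hp''c.abs)
        (contint (hgc.abs.add (continuousOn_const.mul hpc.abs)))
      exact hptwise
    rw [intervalIntegral.integral_add (contint hgc.abs)
      (contint (f := fun y => M * |p y|) (continuousOn_const.mul hpc.abs)), intervalIntegral.integral_const_mul] at h1
    exact h1
  -- L1 ≤ L2 bounds
  have hL1g : (∫ y in (0:ℝ)..1, |g y|) ≤ GN := by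
    have := cs_int (fun y => |g y|) (fun _ => 1) hgc.abs continuousOn_const
    simp only [mul_one] at this
    have h2 : (∫ y in (0:ℝ)..1, |g y| ^ 2) = ∫ y in (0:ℝ)..1, g y ^ 2 := by
      apply intervalIntegral.integral_congr; intro y _; exact sq_abs _
    rw [h2] at this
    simpa using this
  have hL1p : (∫ y in (0:ℝ)..1, |p y|) ≤ PN := by
    have := cs_int (fun y => |p y|) (fun _ => 1) hpc.abs continuousOn_const
    simp only [mul_one] at this
    have h2 : (∫ y in (0:ℝ)..1, |p y| ^ 2) = ∫ y in (0:ℝ)..1, p y ^ 2 := by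
      apply intervalIntegral.integral_congr; intro y _; exact sq_abs _
    rw [h2] at this
    simpa using this
  -- final arithmetic
  have hc1 : (0:ℝ) < 1 + wl / π ^ 2 := by
    have : wl / π ^ 2 > -1 := by
      rw [gt_iff_lt, neg_lt, ← neg_div]
      rw [div_lt_one (by positivity)]
      linarith
    linarith
  have hπc1 : (0:ℝ) < π * (1 + wl / π ^ 2) := by positivity
  have hAeq : π ^ 2 + wl = π ^ 2 * (1 + wl / π ^ 2) := by
    field_simp
  have hple : π * (1 + wl / π ^ 2) ≤ π ^ 2 + wl := by
    rw [hAeq]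
    have : π ≤ π ^ 2 := by nlinarith
    exact mul_le_mul_of_nonneg_right this (le_of_lt hc1)
  have hMPN : M * PN ≤ M / (π * (1 + wl / π ^ 2)) * GN := by
    have h1 : M * ((π ^ 2 + wl) * PN) ≤ M * GN := mul_le_mul_of_nonneg_left hkey hMnn
    rw [div_mul_eq_mul_div, le_div_iff₀ hπc1]
    calc M * PN * (π * (1 + wl / π ^ 2)) ≤ M * PN * (π ^ 2 + wl) :=
          mul_le_mul_of_nonneg_left hple (by positivity)
      _ = M * ((π ^ 2 + wl) * PN) := by ring
      _ ≤ M * GN := h1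
  calc |p' x| ≤ ∫ y in (0:ℝ)..1, |p'' y| := habs
    _ ≤ (∫ y in (0:ℝ)..1, |g y|) + M * ∫ y in (0:ℝ)..1, |p y| := hint1
    _ ≤ GN + M * PN := add_le_add hL1g (mul_le_mul_of_nonneg_left hL1p hMnn)
    _ ≤ GN + M / (π * (1 + wl / π ^ 2)) * GN := add_le_add_right hMPN _
    _ = (1 + M / (π * (1 + wl / π ^ 2))) * GN := by ring
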